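/- Let p be an idempotent ultrafilter in 0⁺(ℝ⁺) such that every member of p is a J-set near zero, and let u, v ∈ ℕ with M a u × v real matrix. Define D(C) = {x ∈ (ℝ⁺)ᵛ : Mx ∈ Cᵘ} for C ⊆ ℝ⁺. If D(C) is a J-set near zero in (ℝ⁺)ᵛ for every C ∈ p, then D(C) is a C-set near zero in (ℝ⁺)ᵛ for every C ∈ p. -/
import Mathlib


open Filter Set

attribute [local instance] Ultrafilter.add Ultrafilter.addSemigroup

/-- The finite sums `FS((b(n))ₙ) = {∑_{n∈H} b(n) : H ⊆ ℕ finite nonempty}`. -/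
def FS {α : Type*} [AddCommMonoid α] (b : ℕ → α) : Set α :=
  {y | ∃ H : Finset ℕ, H.Nonempty ∧ y = ∑ t ∈ H, b t}

/-- `C ⊆ ℝ⁺` is a J-set near zero: for every finite set of positive sequences converging to `0`
and every `δ > 0`, there exist `a ∈ (0,δ)` and a finite nonempty `H ⊆ ℕ` with
`a + ∑_{t∈H} f(t) ∈ C` for every `f` in the family. -/
def JSetNearZero (C : Set ℝ) : Prop :=
  ∀ F : Finset (ℕ → ℝ),
    (∀ f ∈ F, (∀ n, 0 < f n) ∧ Tendsto f atTop (nhds 0)) →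
    ∀ δ : ℝ, 0 < δ →
      ∃ a ∈ Set.Ioo (0:ℝ) δ, ∃ H : Finset ℕ, H.Nonempty ∧
        ∀ f ∈ F, a + ∑ t ∈ H, f t ∈ C

/-- `E ⊆ (ℝ⁺)ᵛ` is a J-set near zero. -/
def JSetNearZeroV (v : ℕ) (E : Set (Fin v → ℝ)) : Prop :=
  ∀ F : Finset (ℕ → Fin v → ℝ),
    (∀ f ∈ F, (∀ n i, 0 < f n i) ∧ ∀ i, Tendsto (fun n => f n i) atTop (nhds 0)) →
    ∀ δ : ℝ, 0 < δ →
      ∃ a : Fin v → ℝ, (∀ i, a i ∈ Set.Ioo (0:ℝ) δ) ∧ ∃ H : Finset ℕ, H.Nonempty ∧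
        ∀ f ∈ F, a + ∑ t ∈ H, f t ∈ E

/-- `C ⊆ ℝ⁺` is a C-set near zero: `C` belongs to some idempotent ultrafilter `p ∈ 0⁺(ℝ⁺)` all
of whose members are J-sets near zero (i.e. `p ∈ J₀(ℝ⁺)`). -/
def CSetNearZero (C : Set ℝ) : Prop :=
  ∃ p : Ultrafilter ℝ, p + p = p ∧ (∀ ε : ℝ, 0 < ε → Set.Ioo 0 ε ∈ p) ∧ C ∈ p ∧
    ∀ A ∈ p, JSetNearZero A

/-- `E ⊆ (ℝ⁺)ᵛ` is a C-set near zero: there is an idempotent in `cl(E) ∩ J₀((ℝ⁺)ᵛ)`. -/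
def CSetNearZeroV (v : ℕ) (E : Set (Fin v → ℝ)) : Prop :=
  ∃ p : Ultrafilter (Fin v → ℝ), p + p = p ∧
    (∀ ε : ℝ, 0 < ε → {x : Fin v → ℝ | ∀ i, 0 < x i ∧ x i < ε} ∈ p) ∧ E ∈ p ∧
    ∀ A ∈ p, JSetNearZeroV v A

/-- `U ⊆ (ℝ⁺)ᵈ` is a weak IP-set near zero: it contains `FS` of a sequence in `(ℝ⁺)ᵈ`
converging to zero. -/
def WeakIPNearZero (d : ℕ) (U : Set (Fin d → ℝ)) : Prop :=
  ∃ b : ℕ → Fin d → ℝ, (∀ n i, 0 < b n i) ∧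
    (∀ i, Tendsto (fun n => b n i) atTop (nhds 0)) ∧ FS b ⊆ U

/-- `M` is image partition regular over `ℝ⁺`: for every finite coloring of `ℝ⁺` there is
`x ∈ (ℝ⁺)ᵛ` with all entries of `Mx` in `ℝ⁺` and monochromatic. -/
def IPR (u v : ℕ) (M : Matrix (Fin u) (Fin v) ℝ) : Prop :=
  ∀ r : ℕ, 0 < r → ∀ c : ℝ → Fin r,
    ∃ x : Fin v → ℝ, (∀ j, 0 < x j) ∧ (∀ i, 0 < M.mulVec x i) ∧
      ∃ k : Fin r, ∀ i, c (M.mulVec x i) = k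

/-- `M` is image partition regular over `ℝ⁺` near zero: for every finite coloring of `ℝ⁺` and
every `δ > 0` there is `x ∈ (ℝ⁺)ᵛ` with the entries of `Mx` monochromatic and in `(0,δ)`. -/
def IPRNearZero (u v : ℕ) (M : Matrix (Fin u) (Fin v) ℝ) : Prop :=
  ∀ r : ℕ, 0 < r → ∀ c : ℝ → Fin r, ∀ δ : ℝ, 0 < δ →
    ∃ x : Fin v → ℝ, (∀ j, 0 < x j) ∧ (∀ i, M.mulVec x i ∈ Set.Ioo 0 δ) ∧
      ∃ k : Fin r, ∀ i, c (M.mulVec x i) = k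

/-- `B` is a first entries matrix: no row is zero, the first nonzero entry of each row is
positive, and first nonzero entries occurring in the same column are equal. -/
def FirstEntriesMatrix {u m : ℕ} (B : Matrix (Fin u) (Fin m) ℝ) : Prop :=
  (∀ i, ∃ j, B i j ≠ 0) ∧
  (∀ i j, (∀ k, k < j → B i k = 0) → B i j ≠ 0 → 0 < B i j) ∧
  (∀ i i' j, (∀ k, k < j → B i k = 0) → (∀ k, k < j → B i' k = 0) →
    B i j ≠ 0 → B i' j ≠ 0 → B i j = B i' j)

section JAux

variable {v : ℕ}

/-- The near-zero neighborhoods in `(ℝ⁺)ᵛ`. -/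
def Nv (v : ℕ) (ε : ℝ) : Set (Fin v → ℝ) := {x | ∀ i, 0 < x i ∧ x i < ε}

lemma jmono {E E' : Set (Fin v → ℝ)} (h : JSetNearZeroV v E) (hs : E ⊆ E') :
    JSetNearZeroV v E' := by
  intro F hF δ hδ
  obtain ⟨a, ha, H, hH, hm⟩ := h F hF δ hδ
  exact ⟨a, ha, H, hH, fun f hf => hs (hm f hf)⟩

lemma geom_sum_le_two (H : Finset ℕ) : (∑ t ∈ H, ((1:ℝ)/2)^t) ≤ 2 := by
  have h := Summable.sum_le_tsum H (fun i _ => by positivity) summable_geometric_two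
  rwa [tsum_geometric_two] at h

lemma half_pow_tendsto : Tendsto (fun n : ℕ => ((1:ℝ)/2)^n) atTop (nhds 0) :=
  tendsto_pow_atTop_nhds_zero_of_lt_one (by norm_num) (by norm_num)

lemma jnonempty {E : Set (Fin v → ℝ)} (h : JSetNearZeroV v E) : E.Nonempty := by
  classical
  have hf : ∀ f ∈ ({fun n (_ : Fin v) => ((1:ℝ)/2)^n} : Finset (ℕ → Fin v → ℝ)),
      (∀ n i, 0 < f n i) ∧ ∀ i, Tendsto (fun n => f n i) atTop (nhds 0) := by
    intro f hf
    simp only [Finset.mem_singleton] at hf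
    subst hf
    exact ⟨fun n i => by positivity, fun i => half_pow_tendsto⟩
  obtain ⟨a, ha, H, hH, hm⟩ := h _ hf 1 one_pos
  exact ⟨_, hm _ (Finset.mem_singleton_self _)⟩

lemma exists_phi (F : Finset (ℕ → Fin v → ℝ))
    (hF : ∀ f ∈ F, ∀ i, Tendsto (fun n => f n i) atTop (nhds 0))
    {c : ℝ} (hc : 0 < c) :
    ∃ φ : ℕ → ℕ, StrictMono φ ∧ ∀ n, ∀ f ∈ F, ∀ i, f (φ n) i < c * (1/2)^n := by
  have key : ∀ n : ℕ, ∃ m, ∀ k, k ≥ m → ∀ f ∈ F, ∀ i, f k i < c * (1/2)^n := by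
    intro n
    have hev : ∀ᶠ k in atTop, ∀ f ∈ F, ∀ i, f k i < c * (1/2)^n := by
      rw [eventually_all_finset]
      intro f hf
      rw [eventually_all]
      intro i
      exact (hF f hf i).eventually_lt_const (by positivity)
    exact eventually_atTop.mp hev
  choose b hb using key
  set φ : ℕ → ℕ := fun n => Nat.rec (b 0) (fun m ih => max (ih + 1) (b (m + 1))) n with hφdef
  have hsucc : ∀ n, φ (n + 1) = max (φ n + 1) (b (n + 1)) := fun n => rfl
  have hmono : StrictMono φ := strictMono_nat_of_lt_succ (by
    intro n
    rw [hsucc]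
    exact lt_of_lt_of_le (Nat.lt_succ_self _) (le_max_left _ _))
  have hge : ∀ n, b n ≤ φ n := by
    intro n
    cases n with
    | zero => exact le_refl _
    | succ m => rw [hsucc]; exact le_max_right _ _
  exact ⟨φ, hmono, fun n f hf i => hb n (φ n) (hge n) f hf i⟩

lemma jset_inter_nv {E : Set (Fin v → ℝ)} (h : JSetNearZeroV v E) {ε : ℝ} (hε : 0 < ε) :
    JSetNearZeroV v (E ∩ Nv v ε) := by
  classical
  intro F hF δ hδ
  have hδ' : 0 < min δ ε := lt_min hδ hε
  set δ' := min δ ε with hδ'def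
  obtain ⟨φ, hφm, hφ⟩ := exists_phi F (fun f hf => (hF f hf).2) (c := δ'/8) (by positivity)
  have hF'cond : ∀ g ∈ F.image (fun f : ℕ → Fin v → ℝ => fun n => f (φ n)),
      (∀ n i, 0 < g n i) ∧ ∀ i, Tendsto (fun n => g n i) atTop (nhds 0) := by
    intro g hg
    rw [Finset.mem_image] at hg
    obtain ⟨f, hf, rfl⟩ := hg
    refine ⟨fun n i => (hF f hf).1 _ i, fun i => ?_⟩
    refine squeeze_zero (fun n => le_of_lt ((hF f hf).1 _ i))
      (fun n => le_of_lt (hφ n f hf i)) ?_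
    simpa using half_pow_tendsto.const_mul (δ'/8)
  obtain ⟨a, ha, H, hH, hm⟩ := h _ hF'cond (δ'/2) (by positivity)
  refine ⟨a, fun i => ⟨(ha i).1,
    lt_of_lt_of_le (ha i).2 (le_trans (by linarith) (min_le_left δ ε))⟩,
    H.image φ, hH.image φ, ?_⟩
  intro f hf
  have hmem := hm _ (Finset.mem_image_of_mem (fun f : ℕ → Fin v → ℝ => fun n => f (φ n)) hf)
  have hsum : ∑ t ∈ H.image φ, f t = ∑ t ∈ H, f (φ t) :=
    Finset.sum_image (fun x _ y _ hxy => hφm.injective hxy)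
  rw [hsum]
  refine ⟨hmem, fun i => ?_⟩
  have hsa : (a + ∑ t ∈ H, f (φ t)) i = a i + ∑ t ∈ H, f (φ t) i := by
    simp [Finset.sum_apply]
  constructor
  · rw [hsa]
    have : (0:ℝ) ≤ ∑ t ∈ H, f (φ t) i :=
      Finset.sum_nonneg (fun t _ => le_of_lt ((hF f hf).1 _ i))
    have := (ha i).1
    linarith
  · rw [hsa]
    have h1 : ∑ t ∈ H, f (φ t) i ≤ ∑ t ∈ H, (δ'/8) * (1/2)^t :=
      Finset.sum_le_sum (fun t _ => le_of_lt (hφ t f hf i))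
    have h2 : ∑ t ∈ H, (δ'/8) * (1/2)^t ≤ (δ'/8) * 2 := by
      rw [← Finset.mul_sum]
      exact mul_le_mul_of_nonneg_left (geom_sum_le_two H) (by positivity)
    have h3 := (ha i).2
    have h4 : δ' ≤ ε := min_le_right δ ε
    linarith

lemma jset_union {A B : Set (Fin v → ℝ)} (h : JSetNearZeroV v (A ∪ B)) :
    JSetNearZeroV v A ∨ JSetNearZeroV v B := by
  classical
  rw [or_iff_not_imp_right]
  intro hB
  rw [JSetNearZeroV] at hB
  push_neg at hB
  obtain ⟨G, hG, η, hη, hfail⟩ := hB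
  intro F hF δ hδ
  have hδ₁ : 0 < min δ η := lt_min hδ hη
  set δ₁ := min δ η with hδ₁def
  set F₁ := F ∪ G with hF₁def
  have hF₁cond : ∀ f ∈ F₁, (∀ n i, 0 < f n i) ∧
      ∀ i, Tendsto (fun n => f n i) atTop (nhds 0) := by
    intro f hf
    rcases Finset.mem_union.mp hf with h' | h'
    exacts [hF f h', hG f h']
  have hF₁ne : F₁.Nonempty := by
    rcases F₁.eq_empty_or_nonempty with he | hne
    · exfalso
      have hGe : G = ∅ := by
        apply Finset.eq_empty_of_forall_notMem
        intro x hx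
        have hx' : x ∈ F₁ := Finset.mem_union_right _ hx
        rw [he] at hx'
        exact absurd hx' (Finset.notMem_empty x)
      obtain ⟨g0, hg0, -⟩ := hfail (fun _ => η/2) (fun i => ⟨by positivity, by linarith⟩)
        {0} (Finset.singleton_nonempty 0)
      rw [hGe] at hg0
      exact absurd hg0 (Finset.notMem_empty g0)
    · exact hne
  haveI : Nonempty {f // f ∈ F₁} := ⟨⟨hF₁ne.choose, hF₁ne.choose_spec⟩⟩
  obtain ⟨ι, hιfin, hHJ⟩ :=
    Combinatorics.Line.exists_mono_in_high_dimension {f // f ∈ F₁} Bool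
  haveI := hιfin
  haveI hιne : Nonempty ι := by
    obtain ⟨l, -⟩ := hHJ (fun _ => true)
    exact ⟨l.proper.choose⟩
  set N := Fintype.card ι with hNdef
  have hN0 : 0 < N := Fintype.card_pos
  set σ : ι ≃ Fin N := Fintype.equivFin ι with hσdef
  set e : ℕ → ι → ℕ := fun t k => N * t + (σ k : ℕ) with hedef
  have he_inj : ∀ t k t' k', e t k = e t' k' → t = t' ∧ k = k' := by
    intro t k t' k' hk
    simp only [hedef] at hk
    have h1 : (σ k : ℕ) < N := (σ k).2
    have h2 : (σ k' : ℕ) < N := (σ k').2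
    have ht : t = t' := by
      have e1 : (N * t + (σ k : ℕ)) / N = t := by
        rw [Nat.mul_add_div hN0, Nat.div_eq_of_lt h1, Nat.add_zero]
      have e2 : (N * t' + (σ k' : ℕ)) / N = t' := by
        rw [Nat.mul_add_div hN0, Nat.div_eq_of_lt h2, Nat.add_zero]
      rw [← e1, ← e2, hk]
    subst ht
    refine ⟨rfl, σ.injective (Fin.ext ?_)⟩
    omega
  have hte : ∀ t k, t ≤ e t k := by
    intro t k
    have h1 : t ≤ N * t := Nat.le_mul_of_pos_left t hN0
    show t ≤ N * t + (σ k : ℕ)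
    omega
  obtain ⟨φ, hφm, hφ⟩ := exists_phi F₁ (fun f hf => (hF₁cond f hf).2) (c := δ₁/8)
    (by positivity)
  set g : (ι → {f // f ∈ F₁}) → ℕ → Fin v → ℝ :=
    fun w t => ∑ k : ι, (w k).1 (φ (e t k)) with hgdef
  have hgapp : ∀ w t i, g w t i = ∑ k : ι, (w k).1 (φ (e t k)) i := by
    intro w t i
    simp only [hgdef, Finset.sum_apply]
  have hgpos : ∀ w t i, 0 < g w t i := by
    intro w t i
    rw [hgapp]
    exact Finset.sum_pos (fun k _ => (hF₁cond _ (w k).2).1 _ i) Finset.univ_nonempty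
  have hgsmall : ∀ w t i, g w t i ≤ ((N : ℝ) * (δ₁/8)) * (1/2)^t := by
    intro w t i
    rw [hgapp]
    calc ∑ k : ι, (w k).1 (φ (e t k)) i ≤ ∑ _k : ι, (δ₁/8) * ((1:ℝ)/2)^t := by
          apply Finset.sum_le_sum
          intro k _
          have h1 := hφ (e t k) _ (w k).2 i
          have h2 : ((1:ℝ)/2)^(e t k) ≤ (1/2)^t :=
            pow_le_pow_of_le_one (by norm_num) (by norm_num) (hte t k)
          have h3 : (δ₁/8) * ((1:ℝ)/2)^(e t k) ≤ (δ₁/8) * (1/2)^t :=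
            mul_le_mul_of_nonneg_left h2 (by positivity)
          linarith
      _ = ((N : ℝ) * (δ₁/8)) * (1/2)^t := by
          rw [Finset.sum_const, Finset.card_univ, nsmul_eq_mul]
          ring
  have hgtend : ∀ w i, Tendsto (fun t => g w t i) atTop (nhds 0) := by
    intro w i
    refine squeeze_zero (fun t => le_of_lt (hgpos w t i)) (fun t => hgsmall w t i) ?_
    simpa using half_pow_tendsto.const_mul ((N : ℝ) * (δ₁/8))
  obtain ⟨a, ha, H, hH, hmem⟩ := h (Finset.univ.image g)
    (by
      intro g' hg'
      rw [Finset.mem_image] at hg'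
      obtain ⟨w, -, rfl⟩ := hg'
      exact ⟨fun t i => hgpos w t i, hgtend w⟩)
    (δ₁/4) (by positivity)
  have hmemw : ∀ w, a + ∑ t ∈ H, g w t ∈ A ∪ B :=
    fun w => hmem _ (Finset.mem_image_of_mem _ (Finset.mem_univ w))
  obtain ⟨l, c, hc⟩ := hHJ (fun w => if a + ∑ t ∈ H, g w t ∈ A then true else false)
  set W : {f // f ∈ F₁} → ι → {f // f ∈ F₁} := fun x k => (l.idxFun k).getD x with hWdef
  have hc' : ∀ x, (if a + ∑ t ∈ H, g (W x) t ∈ A then true else false) = c := fun x => hc x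
  set Vf : Finset ι := Finset.univ.filter (fun k => l.idxFun k = none) with hVfdef
  have hVne : Vf.Nonempty := by
    obtain ⟨i, hi⟩ := l.proper
    exact ⟨i, Finset.mem_filter.mpr ⟨Finset.mem_univ _, hi⟩⟩
  set F0 : ι → {f // f ∈ F₁} := fun k => (l.idxFun k).getD (Classical.arbitrary _) with hF0def
  set a' : Fin v → ℝ := a + ∑ t ∈ H, ∑ k ∈ Vfᶜ, (F0 k).1 (φ (e t k)) with ha'def
  set Hf : Finset ℕ := (H ×ˢ Vf).image (fun q => φ (e q.1 q.2)) with hHfdef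
  have hHfne : Hf.Nonempty := (hH.product hVne).image _
  have hdecomp : ∀ x : {f // f ∈ F₁},
      a + ∑ t ∈ H, g (W x) t = a' + ∑ s ∈ Hf, x.1 s := by
    intro x
    have hsum1 : ∑ s ∈ Hf, x.1 s = ∑ q ∈ H ×ˢ Vf, x.1 (φ (e q.1 q.2)) := by
      rw [hHfdef]
      apply Finset.sum_image
      intro q1 _ q2 _ hq
      have := he_inj _ _ _ _ (hφm.injective hq)
      exact Prod.ext this.1 this.2
    have hsum2 : ∑ q ∈ H ×ˢ Vf, x.1 (φ (e q.1 q.2))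
        = ∑ t ∈ H, ∑ k ∈ Vf, x.1 (φ (e t k)) := by
      rw [Finset.sum_product]
    have hsplit : ∀ t, g (W x) t
        = ∑ k ∈ Vfᶜ, (F0 k).1 (φ (e t k)) + ∑ k ∈ Vf, x.1 (φ (e t k)) := by
      intro t
      have hg1 : g (W x) t = ∑ k : ι, ((W x) k).1 (φ (e t k)) := rfl
      rw [hg1, ← Finset.sum_compl_add_sum Vf (fun k => ((W x) k).1 (φ (e t k)))]
      congr 1
      · apply Finset.sum_congr rfl
        intro k hk
        have hk' : ¬ (l.idxFun k = none) := by
          have := Finset.mem_compl.mp hk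
          simpa [hVfdef] using this
        cases hidx : l.idxFun k with
        | none => exact absurd hidx hk'
        | some y =>
            have h1 : (W x) k = y := by rw [hWdef]; simp [hidx]
            have h2 : F0 k = y := by rw [hF0def]; simp [hidx]
            rw [h1, h2]
      · apply Finset.sum_congr rfl
        intro k hk
        have hk' : l.idxFun k = none := (Finset.mem_filter.mp hk).2
        have h1 : (W x) k = x := by rw [hWdef]; simp [hk']
        rw [h1]
    calc a + ∑ t ∈ H, g (W x) t
        = a + ∑ t ∈ H, (∑ k ∈ Vfᶜ, (F0 k).1 (φ (e t k)) + ∑ k ∈ Vf, x.1 (φ (e t k))) := by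
          congr 1
          exact Finset.sum_congr rfl (fun t _ => hsplit t)
      _ = a' + ∑ s ∈ Hf, x.1 s := by
          rw [ha'def, hsum1, hsum2, Finset.sum_add_distrib]
          abel
  have ha'bound : ∀ i, 0 < a' i ∧ a' i < δ₁ := by
    intro i
    have happ : a' i = a i + ∑ t ∈ H, ∑ k ∈ Vfᶜ, (F0 k).1 (φ (e t k)) i := by
      simp only [ha'def, Pi.add_apply, Finset.sum_apply]
    constructor
    · rw [happ]
      have h0 : (0:ℝ) ≤ ∑ t ∈ H, ∑ k ∈ Vfᶜ, (F0 k).1 (φ (e t k)) i :=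
        Finset.sum_nonneg (fun t _ => Finset.sum_nonneg (fun k _ =>
          le_of_lt ((hF₁cond _ (F0 k).2).1 _ i)))
      have := (ha i).1
      linarith
    · rw [happ]
      have hb1 : ∑ t ∈ H, ∑ k ∈ Vfᶜ, (F0 k).1 (φ (e t k)) i
          ≤ ∑ t ∈ H, ∑ k ∈ Vfᶜ, (δ₁/8) * ((1:ℝ)/2)^(e t k) :=
        Finset.sum_le_sum (fun t _ => Finset.sum_le_sum (fun k _ =>
          le_of_lt (hφ (e t k) _ (F0 k).2 i)))
      have hb2 : ∑ t ∈ H, ∑ k ∈ Vfᶜ, (δ₁/8) * ((1:ℝ)/2)^(e t k)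
          = ∑ s ∈ (H ×ˢ Vfᶜ).image (fun q => e q.1 q.2), (δ₁/8) * ((1:ℝ)/2)^s := by
        rw [Finset.sum_image (by
          intro q1 _ q2 _ hq
          have := he_inj _ _ _ _ hq
          exact Prod.ext this.1 this.2)]
        rw [Finset.sum_product]
      have hb3 : ∑ s ∈ (H ×ˢ Vfᶜ).image (fun q => e q.1 q.2), (δ₁/8) * ((1:ℝ)/2)^s
          ≤ (δ₁/8) * 2 := by
        rw [← Finset.mul_sum]
        exact mul_le_mul_of_nonneg_left (geom_sum_le_two _) (by positivity)
      rw [hb2] at hb1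
      have := (ha i).2
      linarith
  cases hcval : c with
  | true =>
    refine ⟨a', fun i => ⟨(ha'bound i).1,
      lt_of_lt_of_le (ha'bound i).2 (min_le_left δ η)⟩, Hf, hHfne, ?_⟩
    intro f hf
    set x : {f // f ∈ F₁} := ⟨f, Finset.mem_union_left _ hf⟩ with hxdef
    have hx := hc' x
    rw [hcval] at hx
    have hA' : a + ∑ t ∈ H, g (W x) t ∈ A := by
      by_contra hnA
      rw [if_neg hnA] at hx
      exact Bool.noConfusion hx
    rw [hdecomp x] at hA'
    exact hA'
  | false =>
    exfalso
    obtain ⟨g0, hg0G, hg0B⟩ := hfail a'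
      (fun i => ⟨(ha'bound i).1, lt_of_lt_of_le (ha'bound i).2 (min_le_right δ η)⟩) Hf hHfne
    apply hg0B
    set x : {f // f ∈ F₁} := ⟨g0, Finset.mem_union_right _ hg0G⟩ with hxdef
    have hx := hc' x
    rw [hcval] at hx
    have hnA : a + ∑ t ∈ H, g (W x) t ∉ A := by
      intro hA'
      rw [if_pos hA'] at hx
      exact Bool.noConfusion hx
    rcases hmemw (W x) with hA' | hB'
    · exact absurd hA' hnA
    · rw [hdecomp x] at hB'
      exact hB'

lemma jset_diff {E A : Set (Fin v → ℝ)} (hE : JSetNearZeroV v E)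
    (hA : ¬ JSetNearZeroV v A) : JSetNearZeroV v (E \ A) := by
  have hsub : E ⊆ (E \ A) ∪ A := by
    intro x hx
    by_cases hxA : x ∈ A
    · exact Or.inr hxA
    · exact Or.inl ⟨hx, hxA⟩
  rcases jset_union (jmono hE hsub) with h' | h'
  · exact h'
  · exact absurd h' hA

lemma mem_ultra_add {G : Type*} [AddSemigroup G] (q r : Ultrafilter G) (s : Set G) :
    s ∈ q + r ↔ {x | {y | x + y ∈ s} ∈ r} ∈ q := by
  have h := Ultrafilter.eventually_add q r (· ∈ s)
  simpa only [Filter.eventually_iff, Ultrafilter.mem_coe, Set.setOf_mem_eq] using h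

lemma jset_add {q r : Ultrafilter (Fin v → ℝ)} (hq : ∀ A ∈ q, JSetNearZeroV v A)
    (hr : ∀ A ∈ r, JSetNearZeroV v A) : ∀ A ∈ q + r, JSetNearZeroV v A := by
  classical
  intro A hA F hF δ hδ
  rcases F.eq_empty_or_nonempty with rfl | hFne
  · exact ⟨fun _ => δ/2, fun i => ⟨by positivity, by linarith⟩, {0},
      Finset.singleton_nonempty _, by simp⟩
  rw [mem_ultra_add] at hA
  obtain ⟨a, ha, H₁, hH₁, hm₁⟩ := hq _ hA F hF (δ/2) (by positivity)
  set m := H₁.max' hH₁ + 1 with hmdef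
  have hS2 : (⋂ f ∈ F, {y | (a + ∑ t ∈ H₁, f t) + y ∈ A}) ∈ (r : Filter _) := by
    rw [Filter.biInter_finset_mem]
    intro f hf
    exact hm₁ f hf
  rw [Ultrafilter.mem_coe] at hS2
  obtain ⟨a', ha', H₂, hH₂, hm₂⟩ := hr _ hS2
    (F.image (fun f : ℕ → Fin v → ℝ => fun n => f (n + m)))
    (by
      intro g hg
      rw [Finset.mem_image] at hg
      obtain ⟨f, hf, rfl⟩ := hg
      exact ⟨fun n i => (hF f hf).1 _ i, fun i => ((hF f hf).2 i).comp (tendsto_add_atTop_nat m)⟩)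
    (δ/2) (by positivity)
  have hdisj : Disjoint H₁ (H₂.image (· + m)) := by
    rw [Finset.disjoint_left]
    intro t ht ht'
    rw [Finset.mem_image] at ht'
    obtain ⟨s, _, rfl⟩ := ht'
    have := H₁.le_max' _ ht
    omega
  refine ⟨a + a', fun i => ⟨by
      have h1 := (ha i).1
      have h2 := (ha' i).1
      simp only [Pi.add_apply]
      linarith, by
      have h1 := (ha i).2
      have h2 := (ha' i).2
      simp only [Pi.add_apply]
      linarith⟩,
    H₁ ∪ H₂.image (· + m), Finset.Nonempty.inl hH₁, ?_⟩
  intro f hf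
  have hmem := hm₂ _ (Finset.mem_image_of_mem (fun f : ℕ → Fin v → ℝ => fun n => f (n + m)) hf)
  have hmem' : (a + ∑ t ∈ H₁, f t) + (a' + ∑ t ∈ H₂, f (t + m)) ∈ A := by
    have := Set.mem_iInter₂.mp hmem f hf
    exact this
  have hsum : ∑ t ∈ H₁ ∪ H₂.image (· + m), f t
      = ∑ t ∈ H₁, f t + ∑ t ∈ H₂, f (t + m) := by
    rw [Finset.sum_union hdisj]
    congr 1
    exact Finset.sum_image (fun x _ y _ h => by omega)
  rw [hsum]
  have : (a + a') + (∑ t ∈ H₁, f t + ∑ t ∈ H₂, f (t + m))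
      = (a + ∑ t ∈ H₁, f t) + (a' + ∑ t ∈ H₂, f (t + m)) := by abel
  rw [this]
  exact hmem'

end JAux

/-- Lemma 3.4: if `p` is an idempotent in `J₀(ℝ⁺)` and `D(C)` is a J-set near
zero for every `C ∈ p`, then `D(C)` is a C-set near zero for every `C ∈ p`. -/
theorem jSet_to_cSet_preimages (p : Ultrafilter ℝ) (hidem : p + p = p)
    (hzp : ∀ ε : ℝ, 0 < ε → Set.Ioo 0 ε ∈ p) (hJ : ∀ A ∈ p, JSetNearZero A)
    (u v : ℕ) (M : Matrix (Fin u) (Fin v) ℝ)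
    (h : ∀ C ∈ p, JSetNearZeroV v {x : Fin v → ℝ | (∀ j, 0 < x j) ∧ ∀ i, M.mulVec x i ∈ C}) :
    ∀ C ∈ p, CSetNearZeroV v {x : Fin v → ℝ | (∀ j, 0 < x j) ∧ ∀ i, M.mulVec x i ∈ C} := by
  classical
  intro C hC
  set D : Set ℝ → Set (Fin v → ℝ) :=
    fun C' => {x | (∀ j, 0 < x j) ∧ ∀ i, M.mulVec x i ∈ C'} with hDdef
  have hmono : ∀ (q : Ultrafilter (Fin v → ℝ)) (s t : Set (Fin v → ℝ)),
      s ∈ q → s ⊆ t → t ∈ q := fun q s t hs hst => Filter.mem_of_superset hs hst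
  have hmonoR : ∀ (q : Ultrafilter ℝ) (s t : Set ℝ), s ∈ q → s ⊆ t → t ∈ q :=
    fun q s t hs hst => Filter.mem_of_superset hs hst
  have hDinter : ∀ C₁ C₂, D C₁ ∩ D C₂ = D (C₁ ∩ C₂) := by
    intro C₁ C₂
    ext x
    constructor
    · rintro ⟨⟨h1, h2⟩, ⟨h3, h4⟩⟩
      exact ⟨h1, fun i => ⟨h2 i, h4 i⟩⟩
    · rintro ⟨h1, h2⟩
      exact ⟨⟨h1, fun i => (h2 i).1⟩, ⟨h1, fun i => (h2 i).2⟩⟩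
  have hKey : ∀ C' ∈ p, ∀ ε : ℝ, 0 < ε → ∀ L : Finset (Set (Fin v → ℝ)),
      (∀ A ∈ L, ¬ JSetNearZeroV v A) → JSetNearZeroV v ((D C' ∩ Nv v ε) \ ⋃₀ ↑L) := by
    intro C' hC' ε hε L
    induction L using Finset.induction_on with
    | empty =>
        intro _
        simpa using jset_inter_nv (h C' hC') hε
    | @insert A L hAL ih =>
        intro hins
        have h1 : JSetNearZeroV v (((D C' ∩ Nv v ε) \ ⋃₀ ↑L) \ A) :=
          jset_diff (ih (fun A' hA' => hins A' (Finset.mem_insert_of_mem hA')))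
            (hins A (Finset.mem_insert_self _ _))
        have h2 : ((D C' ∩ Nv v ε) \ ⋃₀ ↑L) \ A = (D C' ∩ Nv v ε) \ ⋃₀ ↑(insert A L) := by
          rw [Finset.coe_insert, Set.sUnion_insert, Set.diff_diff, Set.union_comm]
        rwa [h2] at h1
  -- the filter of sets containing some (D C' ∩ Nv ε) \ ⋃₀ L
  set 𝒢 : Set (Set (Fin v → ℝ)) := {S | ∃ C' ∈ p, ∃ ε : ℝ, 0 < ε ∧
    ∃ L : Finset (Set (Fin v → ℝ)), (∀ A ∈ L, ¬ JSetNearZeroV v A) ∧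
      (D C' ∩ Nv v ε) \ ⋃₀ ↑L ⊆ S} with h𝒢def
  have hbase : ∀ S ∈ 𝒢, S.Nonempty := by
    rintro S ⟨C', hC', ε, hε, L, hL, hsub⟩
    exact (jnonempty (hKey C' hC' ε hε L hL)).mono hsub
  set fbase : Filter (Fin v → ℝ) :=
    { sets := 𝒢
      univ_sets := ⟨univ, Filter.univ_mem, 1, one_pos, ∅, by simp, Set.subset_univ _⟩
      sets_of_superset := by
        rintro S S' ⟨C', hC', ε, hε, L, hL, hsub⟩ hSS'
        exact ⟨C', hC', ε, hε, L, hL, hsub.trans hSS'⟩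
      inter_sets := by
        rintro S S' ⟨C₁, hC₁, ε₁, hε₁, L₁, hL₁, hsub₁⟩ ⟨C₂, hC₂, ε₂, hε₂, L₂, hL₂, hsub₂⟩
        refine ⟨C₁ ∩ C₂, Filter.inter_mem hC₁ hC₂, min ε₁ ε₂, lt_min hε₁ hε₂,
          L₁ ∪ L₂, ?_, ?_⟩
        · intro A hA
          rcases Finset.mem_union.mp hA with h' | h'
          exacts [hL₁ A h', hL₂ A h']
        · rintro x ⟨⟨hxD, hxN⟩, hxL⟩
          have hxD1 : x ∈ D C₁ ∩ D C₂ := by rw [hDinter]; exact hxD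
          constructor
          · apply hsub₁
            refine ⟨⟨hxD1.1, fun i => ⟨(hxN i).1,
              lt_of_lt_of_le (hxN i).2 (min_le_left _ _)⟩⟩, ?_⟩
            rintro ⟨s, hs, hxs⟩
            have hs' : s ∈ (↑(L₁ ∪ L₂) : Set (Set (Fin v → ℝ))) := by
              rw [Finset.coe_union]
              exact Or.inl hs
            exact hxL ⟨s, hs', hxs⟩
          · apply hsub₂
            refine ⟨⟨hxD1.2, fun i => ⟨(hxN i).1,
              lt_of_lt_of_le (hxN i).2 (min_le_right _ _)⟩⟩, ?_⟩
            rintro ⟨s, hs, hxs⟩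
            have hs' : s ∈ (↑(L₁ ∪ L₂) : Set (Set (Fin v → ℝ))) := by
              rw [Finset.coe_union]
              exact Or.inr hs
            exact hxL ⟨s, hs', hxs⟩ } with hfbasedef
  have hfne : fbase.NeBot := by
    refine ⟨fun hbot => ?_⟩
    have hemp : (∅ : Set (Fin v → ℝ)) ∈ fbase := by
      rw [hbot]
      exact Filter.mem_bot
    obtain ⟨x, hx⟩ := hbase ∅ hemp
    exact hx
  haveI := hfne
  set q₀ : Ultrafilter (Fin v → ℝ) := Ultrafilter.of fbase with hq₀def
  have hq₀mem : ∀ S ∈ 𝒢, S ∈ q₀ := by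
    intro S hS
    have hSf : S ∈ fbase := hS
    exact (Ultrafilter.of_le fbase) hSf
  -- the subsemigroup T
  set T : Set (Ultrafilter (Fin v → ℝ)) := {q | (∀ ε : ℝ, 0 < ε → Nv v ε ∈ q) ∧
    (∀ C' ∈ p, D C' ∈ q) ∧ ∀ A ∈ q, JSetNearZeroV v A} with hTdef
  have hq₀T : q₀ ∈ T := by
    refine ⟨?_, ?_, ?_⟩
    · intro ε hε
      exact hq₀mem _ ⟨univ, Filter.univ_mem, ε, hε, ∅, by simp, fun x hx => hx.1.2⟩
    · intro C' hC'
      exact hq₀mem _ ⟨C', hC', 1, one_pos, ∅, by simp, fun x hx => hx.1.1⟩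
    · intro A hA
      by_contra hnJ
      have hAc : Aᶜ ∈ q₀ := by
        refine hq₀mem _ ⟨univ, Filter.univ_mem, 1, one_pos, {A}, by simpa using hnJ, ?_⟩
        intro x hx hxA
        exact hx.2 ⟨A, by simp, hxA⟩
      exact (Ultrafilter.compl_notMem_iff.mpr hA) hAc
  have hTadd : ∀ q ∈ T, ∀ r ∈ T, q + r ∈ T := by
    rintro q ⟨hq1, hq2, hq3⟩ r ⟨hr1, hr2, hr3⟩
    refine ⟨?_, ?_, jset_add hq3 hr3⟩
    · intro ε hε
      rw [mem_ultra_add]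
      apply hmono _ _ _ (hq1 (ε/2) (by positivity))
      intro x hx
      apply hmono _ _ _ (hr1 (ε/2) (by positivity))
      intro y hy i
      have h1 := hx i
      have h2 := hy i
      simp only [Pi.add_apply]
      constructor
      · linarith [h1.1, h2.1]
      · linarith [h1.2, h2.2]
    · intro C' hC'
      rw [mem_ultra_add]
      have hCstar : {s : ℝ | {t | s + t ∈ C'} ∈ p} ∈ p := by
        have hmem : C' ∈ p + p := by rw [hidem]; exact hC'
        rw [mem_ultra_add] at hmem
        exact hmem
      have hC2 : C' ∩ {s : ℝ | {t | s + t ∈ C'} ∈ p} ∈ p := Filter.inter_mem hC' hCstar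
      apply hmono _ _ _ (hq2 _ hC2)
      intro x hx
      have hx1 : ∀ j, 0 < x j := hx.1
      have hx2 := hx.2
      have hC3 : (⋂ i : Fin u, {t : ℝ | M.mulVec x i + t ∈ C'}) ∈ p :=
        Filter.iInter_mem.mpr (fun i => (hx2 i).2)
      apply hmono _ _ _ (hr2 _ hC3)
      intro y hy
      refine ⟨fun j => ?_, fun i => ?_⟩
      · simp only [Pi.add_apply]
        exact add_pos (hx1 j) (hy.1 j)
      · have hMadd : M.mulVec (x + y) i = M.mulVec x i + M.mulVec y i := by
          rw [Matrix.mulVec_add]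
          rfl
        rw [hMadd]
        exact Set.mem_iInter.mp (hy.2 i) i
  have hTclosed : IsClosed T := by
    have h1 : IsClosed {q : Ultrafilter (Fin v → ℝ) | ∀ ε : ℝ, 0 < ε → Nv v ε ∈ q} := by
      have heq : {q : Ultrafilter (Fin v → ℝ) | ∀ ε : ℝ, 0 < ε → Nv v ε ∈ q}
          = ⋂ (ε : ℝ) (_ : 0 < ε), {q : Ultrafilter (Fin v → ℝ) | Nv v ε ∈ q} := by
        ext q
        simp only [Set.mem_iInter, Set.mem_setOf_eq]
      rw [heq]
      exact isClosed_iInter (fun ε => isClosed_iInter (fun _ => ultrafilter_isClosed_basic _))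
    have h2 : IsClosed {q : Ultrafilter (Fin v → ℝ) | ∀ C' ∈ p, D C' ∈ q} := by
      have heq : {q : Ultrafilter (Fin v → ℝ) | ∀ C' ∈ p, D C' ∈ q}
          = ⋂ (C' : Set ℝ) (_ : C' ∈ p), {q : Ultrafilter (Fin v → ℝ) | D C' ∈ q} := by
        ext q
        simp only [Set.mem_iInter, Set.mem_setOf_eq]
      rw [heq]
      exact isClosed_iInter (fun C' => isClosed_iInter (fun _ => ultrafilter_isClosed_basic _))
    have h3 : IsClosed {q : Ultrafilter (Fin v → ℝ) | ∀ A ∈ q, JSetNearZeroV v A} := by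
      have heq : {q : Ultrafilter (Fin v → ℝ) | ∀ A ∈ q, JSetNearZeroV v A}
          = ⋂ (A : Set (Fin v → ℝ)) (_ : ¬ JSetNearZeroV v A),
            {q : Ultrafilter (Fin v → ℝ) | Aᶜ ∈ q} := by
        ext q
        simp only [Set.mem_iInter, Set.mem_setOf_eq]
        constructor
        · intro hq A hnJ
          rw [Ultrafilter.compl_mem_iff_notMem]
          intro hA
          exact hnJ (hq A hA)
        · intro hq A hA
          by_contra hnJ
          have := hq A hnJ
          rw [Ultrafilter.compl_mem_iff_notMem] at this
          exact this hA
      rw [heq]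
      exact isClosed_iInter (fun A => isClosed_iInter (fun _ => ultrafilter_isClosed_basic _))
    have heqT : T = {q : Ultrafilter (Fin v → ℝ) | ∀ ε : ℝ, 0 < ε → Nv v ε ∈ q}
        ∩ ({q | ∀ C' ∈ p, D C' ∈ q} ∩ {q | ∀ A ∈ q, JSetNearZeroV v A}) := rfl
    rw [heqT]
    exact h1.inter (h2.inter h3)
  obtain ⟨q, hqT, hqidem⟩ := exists_idempotent_in_compact_add_subsemigroup
    (fun r => Ultrafilter.continuous_add_left r) T ⟨q₀, hq₀T⟩ hTclosed.isCompact hTadd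
  exact ⟨q, hqidem, hqT.1, hqT.2.1 C hC, hqT.2.2⟩
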